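/- arXiv:1010.4070 — 7 statements merged into one kernel-verified Lean document; each statement's English description precedes it below -/
import Mathlib

section
/- Let Ω ⊆ ℝⁿ be an open convex set and let E : ℝⁿ → ℝ be twice continuously differentiable on Ω, with its Hessian (the second derivative of E) positive definite at every point of Ω. Then the gradient map ∇E : Ω → ℝⁿ is an injective open map, hence a homeomorphism onto its image. -/
open InnerProductSpace Set

section aux
variable {n : ℕ}
local notation "H" => EuclideanSpace ℝ (Fin n)

/-- key monotonicity: for p ≠ q in Ω, `fderiv E q (q-p) > fderiv E p (q-p)`. -/
theorem key_mono (Ω : Set (EuclideanSpace ℝ (Fin n)))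
    (hΩopen : IsOpen Ω) (hΩconv : Convex ℝ Ω)
    (E : EuclideanSpace ℝ (Fin n) → ℝ)
    (hC2 : ContDiffOn ℝ 2 E Ω)
    (hHess : ∀ p ∈ Ω, ∀ v : EuclideanSpace ℝ (Fin n), v ≠ 0 →
      0 < fderiv ℝ (fderiv ℝ E) p v v)
    {p q : H} (hp : p ∈ Ω) (hq : q ∈ Ω) (hne : p ≠ q) :
    fderiv ℝ E p (q - p) < fderiv ℝ E q (q - p) := by
  set v : H := q - p with hv
  have hvne : v ≠ 0 := sub_ne_zero.2 (Ne.symm hne)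
  set γ : ℝ → H := fun t => p + t • v with hγ
  have hγmem : ∀ t ∈ Icc (0:ℝ) 1, γ t ∈ Ω := by
    intro t ht
    have : p + t • v = (1 - t) • p + t • q := by
      simp [hv, smul_sub, sub_smul]; abel
    rw [hγ]; simp only []
    rw [this]
    exact hΩconv hp hq (by linarith [ht.1, ht.2]) ht.1 (by ring)
  set g : ℝ → ℝ := fun t => fderiv ℝ E (γ t) v with hg
  -- derivative of g
  have hderiv : ∀ t ∈ Icc (0:ℝ) 1, HasDerivAt g (fderiv ℝ (fderiv ℝ E) (γ t) v v) t := by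
    intro t ht
    have hmem : γ t ∈ Ω := hγmem t ht
    have hca : ContDiffAt ℝ 2 E (γ t) := hC2.contDiffAt (hΩopen.mem_nhds hmem)
    have h1 : ContDiffAt ℝ 1 (fderiv ℝ E) (γ t) := hca.fderiv_right (by norm_num)
    have h2 : HasFDerivAt (fderiv ℝ E) (fderiv ℝ (fderiv ℝ E) (γ t)) (γ t) :=
      h1.differentiableAt one_ne_zero |>.hasFDerivAt
    have hγd : HasDerivAt γ v t := by
      have := ((hasDerivAt_id t).smul_const v).const_add p; simp only [one_smul] at this; exact this
    have h3 : HasDerivAt (fun s => fderiv ℝ E (γ s)) (fderiv ℝ (fderiv ℝ E) (γ t) v) t :=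
      h2.comp_hasDerivAt t hγd
    have h4 := (ContinuousLinearMap.apply ℝ ℝ v).hasFDerivAt.comp_hasDerivAt t h3
    exact h4
  -- MVT
  obtain ⟨c, hc, hcd⟩ := exists_hasDerivAt_eq_slope g
      (fun t => fderiv ℝ (fderiv ℝ E) (γ t) v v) (by norm_num : (0:ℝ) < 1)
      (fun t ht => (hderiv t ht).continuousAt.continuousWithinAt)
      (fun t ht => hderiv t (Ioo_subset_Icc_self ht))
  have hpos : 0 < fderiv ℝ (fderiv ℝ E) (γ c) v v :=
    hHess _ (hγmem c (Ioo_subset_Icc_self hc)) v hvne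
  have : g 0 < g 1 := by
    have h01 : g 1 - g 0 = fderiv ℝ (fderiv ℝ E) (γ c) v v := by
      rw [hcd]; ring
    linarith
  have e1 : γ 1 = q := by simp [hγ, hv]
  have e0 : γ 0 = p := by simp [hγ]
  simpa only [hg, e0, e1] using this
end aux


/-- If `E` is twice continuously differentiable on an open convex
set `Ω ⊆ ℝⁿ` with positive definite Hessian at every point of `Ω`, then the
gradient map `∇E : Ω → ℝⁿ` is an injective open map, hence a homeomorphism onto
its image. -/
theorem gradient_map_injective_open_homeomorph
    {n : ℕ} (Ω : Set (EuclideanSpace ℝ (Fin n)))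
    (hΩopen : IsOpen Ω) (hΩconv : Convex ℝ Ω)
    (E : EuclideanSpace ℝ (Fin n) → ℝ)
    (hC2 : ContDiffOn ℝ 2 E Ω)
    (hHess : ∀ p ∈ Ω, ∀ v : EuclideanSpace ℝ (Fin n), v ≠ 0 →
      0 < fderiv ℝ (fderiv ℝ E) p v v) :
    Set.InjOn (fun p => gradient E p) Ω ∧
    (∀ U ⊆ Ω, IsOpen U → IsOpen ((fun p => gradient E p) '' U)) ∧
    ∃ h : Ω ≃ₜ ((fun p => gradient E p) '' Ω),
      ∀ p : Ω, (h p : EuclideanSpace ℝ (Fin n)) = gradient E p := by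
  set G : EuclideanSpace ℝ (Fin n) → EuclideanSpace ℝ (Fin n) :=
    fun p => gradient E p with hG
  have hGdef : ∀ p, G p = (toDual ℝ (EuclideanSpace ℝ (Fin n))).symm (fderiv ℝ E p) :=
    fun p => rfl
  -- injectivity
  have hinj : Set.InjOn G Ω := by
    intro p hp q hq heq
    by_contra hne
    have h1 := key_mono Ω hΩopen hΩconv E hC2 hHess hp hq hne
    have h2 : fderiv ℝ E p = fderiv ℝ E q := by
      have := congrArg (toDual ℝ (EuclideanSpace ℝ (Fin n))) heq
      simpa [hGdef] using this
    rw [h2] at h1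
    exact lt_irrefl _ h1
  -- strict derivative at each point of Ω, with invertible derivative
  have hopenmap : ∀ p ∈ Ω, Filter.map (fderiv ℝ E) (nhds p) = nhds (fderiv ℝ E p) := by
    intro p hp
    have hca : ContDiffAt ℝ 2 E p := hC2.contDiffAt (hΩopen.mem_nhds hp)
    have h1 : ContDiffAt ℝ 1 (fderiv ℝ E) p := hca.fderiv_right (by norm_num)
    have hB : HasStrictFDerivAt (fderiv ℝ E) (fderiv ℝ (fderiv ℝ E) p) p :=
      h1.hasStrictFDerivAt one_ne_zero
    set B := fderiv ℝ (fderiv ℝ E) p with hBdef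
    have hBinj : Function.Injective B := by
      intro w w' hww'
      by_contra hne
      have hsub : w - w' ≠ 0 := sub_ne_zero.2 hne
      have hB0 : B (w - w') = 0 := by rw [map_sub, hww', sub_self]
      have := hHess p hp (w - w') hsub
      rw [← hBdef, hB0] at this
      simp at this
    have hrank : Module.finrank ℝ (EuclideanSpace ℝ (Fin n)) =
        Module.finrank ℝ (EuclideanSpace ℝ (Fin n) →L[ℝ] ℝ) := by
      rw [← LinearEquiv.finrank_eq
        (LinearMap.toContinuousLinearMap :
          (EuclideanSpace ℝ (Fin n) →ₗ[ℝ] ℝ) ≃ₗ[ℝ] (EuclideanSpace ℝ (Fin n) →L[ℝ] ℝ)),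
        Module.finrank_linearMap, Module.finrank_self, mul_one]
    have hBsurj : Function.Surjective B :=
      (LinearMap.injective_iff_surjective_of_finrank_eq_finrank hrank).mp hBinj
    set Φ : EuclideanSpace ℝ (Fin n) ≃L[ℝ] (EuclideanSpace ℝ (Fin n) →L[ℝ] ℝ) :=
      (LinearEquiv.ofBijective (B : EuclideanSpace ℝ (Fin n) →ₗ[ℝ]
        (EuclideanSpace ℝ (Fin n) →L[ℝ] ℝ)) ⟨hBinj, hBsurj⟩).toContinuousLinearEquiv with hΦ
    have hΦB : (Φ : EuclideanSpace ℝ (Fin n) →L[ℝ] (EuclideanSpace ℝ (Fin n) →L[ℝ] ℝ)) = B := by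
      ext w; rfl
    have hG' : HasStrictFDerivAt (fderiv ℝ E)
        (Φ : EuclideanSpace ℝ (Fin n) →L[ℝ] (EuclideanSpace ℝ (Fin n) →L[ℝ] ℝ)) p := by
      rw [hΦB]; exact hB
    exact hG'.map_nhds_eq_of_equiv
  have hGmap : ∀ p ∈ Ω, Filter.map G (nhds p) = nhds (G p) := by
    intro p hp
    have : Filter.map G (nhds p) =
        Filter.map (toDual ℝ (EuclideanSpace ℝ (Fin n))).symm
          (Filter.map (fderiv ℝ E) (nhds p)) := by
      rw [Filter.map_map]; rfl
    rw [this, hopenmap p hp]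
    have h2 := ((toDual ℝ (EuclideanSpace ℝ (Fin n))).symm.toHomeomorph).map_nhds_eq
      (fderiv ℝ E p)
    rw [LinearIsometryEquiv.coe_toHomeomorph] at h2
    rw [h2, hGdef]
  -- open map
  have hopen : ∀ U ⊆ Ω, IsOpen U → IsOpen (G '' U) := by
    intro U hUΩ hU
    rw [isOpen_iff_mem_nhds]
    rintro y ⟨p, hpU, rfl⟩
    rw [← hGmap p (hUΩ hpU), Filter.mem_map]
    exact Filter.mem_of_superset (hU.mem_nhds hpU) (Set.subset_preimage_image G U)
  refine ⟨hinj, hopen, ?_⟩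
  -- homeomorphism
  have hcont : ContinuousOn G Ω := by
    have := hC2.continuousOn_fderiv_of_isOpen hΩopen (by norm_num)
    exact ((toDual ℝ (EuclideanSpace ℝ (Fin n))).symm.continuous.comp_continuousOn this)
  set e := Equiv.Set.imageOfInjOn G Ω hinj with he
  have hecont : Continuous e := by
    have : Continuous (Ω.restrict G) := hcont.restrict
    exact this.subtype_mk _
  have heopen : IsOpenMap e := by
    intro V hV
    obtain ⟨W, hW, rfl⟩ := isOpen_induced_iff.mp hV
    have himg : IsOpen (G '' (Ω ∩ W)) :=
      hopen _ Set.inter_subset_left (hΩopen.inter hW)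
    have : e '' (Subtype.val ⁻¹' W) = Subtype.val ⁻¹' (G '' (Ω ∩ W)) := by
      ext y
      constructor
      · rintro ⟨x, hxW, rfl⟩
        exact ⟨x, ⟨x.2, hxW⟩, rfl⟩
      · rintro ⟨x, ⟨hxΩ, hxW⟩, hxy⟩
        exact ⟨⟨x, hxΩ⟩, hxW, Subtype.ext hxy⟩
    rw [this]
    exact himg.preimage continuous_subtype_val
  exact ⟨Equiv.toHomeomorphOfContinuousOpen e hecont heopen, fun p => rfl⟩
end

section
/- Fix positive reals d_i, d_k. For y > 0 such that d_i, y, d_k satisfy the strict triangle inequalities, define θ_i(y) = arccos((y² + d_k² − d_i²)/(2 y d_k)). Then θ_i has derivative dθ_i/dy = −(d_i cos θ_k)/(2A) at each such y, where cos θ_k = (d_i² + y² − d_k²)/(2 d_i y) and A = (1/2) y d_k sin(θ_i(y)) is the area of the Euclidean triangle with side lengths d_i, y, d_k. -/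
/-- For a Euclidean triangle with side lengths `d_i, y, d_k`
(satisfying the strict triangle inequalities), the angle
`θ_i(y) = arccos((y² + d_k² − d_i²)/(2 y d_k))` opposite the side of length
`d_i` satisfies `dθ_i/dy = −(d_i cos θ_k)/(2A)`, where
`cos θ_k = (d_i² + y² − d_k²)/(2 d_i y)` and `A = (1/2) y d_k sin θ_i(y)` is
the area of the triangle. -/
theorem deriv_angle_adjacent_edge
    (di dk : ℝ) (hdi : 0 < di) (hdk : 0 < dk)
    (y : ℝ) (hy : 0 < y)
    (h₁ : di < y + dk) (h₂ : y < di + dk) (h₃ : dk < di + y) :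
    HasDerivAt (fun z : ℝ => Real.arccos ((z ^ 2 + dk ^ 2 - di ^ 2) / (2 * z * dk)))
      (-(di * ((di ^ 2 + y ^ 2 - dk ^ 2) / (2 * di * y))) /
        (2 * ((1 / 2) * y * dk *
          Real.sin (Real.arccos ((y ^ 2 + dk ^ 2 - di ^ 2) / (2 * y * dk)))))) y := by
  set x : ℝ := (y ^ 2 + dk ^ 2 - di ^ 2) / (2 * y * dk) with hx
  have hden : (0:ℝ) < 2 * y * dk := by positivity
  have hx1 : x < 1 := by
    rw [hx, div_lt_one hden]; nlinarith
  have hxn1 : -1 < x := by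
    rw [hx, lt_div_iff₀ hden]; nlinarith
  have hs : 0 < 1 - x ^ 2 := by nlinarith
  have hsq : 0 < Real.sqrt (1 - x ^ 2) := Real.sqrt_pos.mpr hs
  have harc : HasDerivAt Real.arccos (-(1 / Real.sqrt (1 - x ^ 2))) x :=
    Real.hasDerivAt_arccos hxn1.ne' hx1.ne
  have hnum : HasDerivAt (fun z : ℝ => z ^ 2 + dk ^ 2 - di ^ 2) (2 * y ^ 1) y :=
    (((hasDerivAt_pow 2 y).add_const (dk ^ 2)).sub_const (di ^ 2)).congr_deriv (by push_cast; ring)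
  have hdenf : HasDerivAt (fun z : ℝ => 2 * z * dk) (2 * dk) y := by
    have := ((hasDerivAt_id y).const_mul (2:ℝ)).mul_const dk
    simpa using this
  have hg : HasDerivAt (fun z : ℝ => (z ^ 2 + dk ^ 2 - di ^ 2) / (2 * z * dk))
      ((2 * y ^ 1 * (2 * y * dk) - (y ^ 2 + dk ^ 2 - di ^ 2) * (2 * dk)) / (2 * y * dk) ^ 2) y :=
    hnum.div hdenf (ne_of_gt hden)
  have hcomp := harc.comp y hg
  refine hcomp.congr_deriv ?_
  symm
  rw [Real.sin_arccos]
  set s := Real.sqrt (1 - x ^ 2) with hsdef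
  have hs2 : s ^ 2 = 1 - x ^ 2 := Real.sq_sqrt hs.le
  have hx2 : x * (2 * y * dk) = y ^ 2 + dk ^ 2 - di ^ 2 := by
    rw [hx]; field_simp
  field_simp
  nlinarith [hs2, hx2, sq_nonneg s, hsq]
end

section
/- Let Ω = {u ∈ ℝ³ : u₁, u₂, u₃ > 0 and √u₁, √u₂, √u₃ satisfy the strict triangle inequalities}. For u ∈ Ω and α ∈ {1,2,3}, let W_α(u) = cot θ_α, where θ_α is the angle opposite the side of length d_α = √(2 u_α) in the Euclidean triangle with side lengths d₁, d₂, d₃. Then for all u ∈ Ω and all α, β ∈ {1,2,3}, the mixed partial derivatives are symmetric: ∂W_α/∂u_β (u) = ∂W_β/∂u_α (u). -/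
/-- The edge length `d_α = √(2 u_α)` determined by the variable `u_α = d_α²/2`. -/
noncomputable def triEdge (u : Fin 3 → ℝ) (α : Fin 3) : ℝ :=
  Real.sqrt (2 * u α)

/-- The angle opposite the side `d_α`, by the law of cosines. -/
noncomputable def triAngle (u : Fin 3 → ℝ) (α : Fin 3) : ℝ :=
  Real.arccos ((triEdge u (α + 1) ^ 2 + triEdge u (α + 2) ^ 2 - triEdge u α ^ 2) /
    (2 * triEdge u (α + 1) * triEdge u (α + 2)))

/-- The cotangent edge weight `W_α(u) = cot θ_α`. -/
noncomputable def triWeight (α : Fin 3) (u : Fin 3 → ℝ) : ℝ :=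
  Real.cot (triAngle u α)

/-- The admissible metric space: `u_α > 0` and `√u₁, √u₂, √u₃` satisfy the strict
triangle inequalities. -/
def triOmega : Set (Fin 3 → ℝ) :=
  {u | (∀ α, 0 < u α) ∧
    ∀ α, Real.sqrt (u α) < Real.sqrt (u (α + 1)) + Real.sqrt (u (α + 2))}

/- ### Auxiliary machinery -/

/-- Four times the squared area of the triangle, as a polynomial in `u`. -/
noncomputable def cwQ (v : Fin 3 → ℝ) : ℝ :=
  2 * (v 0 * v 1 + v 1 * v 2 + v 2 * v 0) - (v 0 ^ 2 + v 1 ^ 2 + v 2 ^ 2)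

/-- The linear quantity `u_β + u_γ - u_α`. -/
noncomputable def cwS (γ : Fin 3) (v : Fin 3 → ℝ) : ℝ := v (γ + 1) + v (γ + 2) - v γ

/-- Coordinate projection as a continuous linear map. -/
noncomputable def cwpr (i : Fin 3) : (Fin 3 → ℝ) →L[ℝ] ℝ :=
  ContinuousLinearMap.proj i

lemma cwQ_pos {u : Fin 3 → ℝ} (hu : u ∈ triOmega) : 0 < cwQ u := by
  obtain ⟨hp, ht⟩ := hu
  have h0 : Real.sqrt (u 0) < Real.sqrt (u 1) + Real.sqrt (u 2) := by simpa using ht 0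
  have h1 : Real.sqrt (u 1) < Real.sqrt (u 2) + Real.sqrt (u 0) := by simpa using ht 1
  have h2 : Real.sqrt (u 2) < Real.sqrt (u 0) + Real.sqrt (u 1) := by simpa using ht 2
  set a := Real.sqrt (u 0)
  set b := Real.sqrt (u 1)
  set c := Real.sqrt (u 2)
  have ha : a ^ 2 = u 0 := Real.sq_sqrt (hp 0).le
  have hb : b ^ 2 = u 1 := Real.sq_sqrt (hp 1).le
  have hc : c ^ 2 = u 2 := Real.sq_sqrt (hp 2).le
  have hap : 0 < a := Real.sqrt_pos.2 (hp 0)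
  have hbp : 0 < b := Real.sqrt_pos.2 (hp 1)
  have hcp : 0 < c := Real.sqrt_pos.2 (hp 2)
  have key : cwQ u = (a + b + c) * (b + c - a) * (c + a - b) * (a + b - c) := by
    rw [cwQ, ← ha, ← hb, ← hc]; ring
  rw [key]
  have : 0 < a + b + c := by linarith
  apply mul_pos (mul_pos (mul_pos this (by linarith)) (by linarith)) (by linarith)

lemma cwQ_eq (v : Fin 3 → ℝ) (γ : Fin 3) :
    4 * cwQ v = 16 * (v (γ + 1) * v (γ + 2)) - (2 * cwS γ v) ^ 2 := by
  fin_cases γ <;> simp [cwQ, cwS] <;> ring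

/-- Pointwise formula: the cotangent weight equals `S_γ / √Q`. -/
lemma triWeight_eq (v : Fin 3 → ℝ) (hv : ∀ i, 0 < v i) (hQ : 0 < cwQ v) (γ : Fin 3) :
    triWeight γ v = cwS γ v * (Real.sqrt (cwQ v))⁻¹ := by
  have hb : 0 < v (γ + 1) := hv _
  have hc : 0 < v (γ + 2) := hv _
  have ha : 0 < v γ := hv _
  unfold triWeight triAngle
  set D : ℝ := 2 * triEdge v (γ + 1) * triEdge v (γ + 2) with hD
  have hDpos : 0 < D := by
    rw [hD]; unfold triEdge; positivity
  have hD2 : D ^ 2 = 16 * (v (γ + 1) * v (γ + 2)) := by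
    rw [hD]; unfold triEdge
    rw [mul_pow, mul_pow, Real.sq_sqrt (by positivity), Real.sq_sqrt (by positivity)]
    ring
  have e1 : triEdge v (γ + 1) ^ 2 = 2 * v (γ + 1) := Real.sq_sqrt (by positivity)
  have e2 : triEdge v (γ + 2) ^ 2 = 2 * v (γ + 2) := Real.sq_sqrt (by positivity)
  have e0 : triEdge v γ ^ 2 = 2 * v γ := Real.sq_sqrt (by positivity)
  rw [e1, e2, e0]
  have hnum : 2 * v (γ + 1) + 2 * v (γ + 2) - 2 * v γ = 2 * cwS γ v := by
    rw [cwS]; ring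
  rw [hnum]
  set x : ℝ := 2 * cwS γ v / D with hx
  have h1x : 1 - x ^ 2 = 4 * cwQ v / D ^ 2 := by
    rw [hx, div_pow, cwQ_eq v γ, ← hD2]
    field_simp
  have hx2 : x ^ 2 < 1 := by
    have h4 : 0 < 4 * cwQ v / D ^ 2 := by positivity
    linarith
  have hxabs : |x| < 1 := by
    rwa [← sq_lt_one_iff_abs_lt_one]
  have hx1 : -1 ≤ x := by have := abs_lt.1 hxabs; linarith
  have hx1' : x ≤ 1 := by have := abs_lt.1 hxabs; linarith
  rw [Real.cot_eq_cos_div_sin, Real.cos_arccos hx1 hx1', Real.sin_arccos]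
  have hs : Real.sqrt (1 - x ^ 2) = 2 * Real.sqrt (cwQ v) / D := by
    rw [h1x, show (4 : ℝ) * cwQ v = (2 * Real.sqrt (cwQ v)) ^ 2 by
      rw [mul_pow, Real.sq_sqrt hQ.le]; ring]
    rw [Real.sqrt_div (by positivity), Real.sqrt_sq (by positivity),
      Real.sqrt_sq hDpos.le]
  rw [hs, hx]
  have hsQ : Real.sqrt (cwQ v) ≠ 0 := (Real.sqrt_pos.2 hQ).ne'
  field_simp

/-- The derivative of `cwQ`. -/
lemma hasFDerivAt_cwQ (u : Fin 3 → ℝ) :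
    HasFDerivAt cwQ
      ((2 * cwS 0 u) • cwpr 0 + (2 * cwS 1 u) • cwpr 1 + (2 * cwS 2 u) • cwpr 2) u := by
  have h : ∀ i : Fin 3, HasFDerivAt (fun v : Fin 3 → ℝ => v i) (cwpr i) u := fun i =>
    (cwpr i).hasFDerivAt
  have hmain : HasFDerivAt (fun v : Fin 3 → ℝ =>
      2 * (v 0 * v 1 + v 1 * v 2 + v 2 * v 0) - (v 0 * v 0 + v 1 * v 1 + v 2 * v 2)) _ u := ((((((h 0).mul (h 1)).add ((h 1).mul (h 2))).add
    ((h 2).mul (h 0))).const_mul 2).sub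
      ((((h 0).mul (h 0)).add ((h 1).mul (h 1))).add ((h 2).mul (h 2))))
  have hQ : cwQ = fun v : Fin 3 → ℝ =>
      2 * (v 0 * v 1 + v 1 * v 2 + v 2 * v 0) - (v 0 * v 0 + v 1 * v 1 + v 2 * v 2) := by
    funext v; rw [cwQ]; ring
  rw [hQ]
  refine hmain.congr_fderiv ?_
  refine ContinuousLinearMap.ext fun w => ?_
  simp [cwpr, cwS]
  ring

lemma hasFDerivAt_weight (u : Fin 3 → ℝ) (hQ : 0 < cwQ u) (γ : Fin 3) :
    HasFDerivAt (fun v => cwS γ v * (Real.sqrt (cwQ v))⁻¹)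
      (cwS γ u • ((-(Real.sqrt (cwQ u) ^ 2)⁻¹) • ((1 / (2 * Real.sqrt (cwQ u))) •
          ((2 * cwS 0 u) • cwpr 0 + (2 * cwS 1 u) • cwpr 1 + (2 * cwS 2 u) • cwpr 2)))
        + (Real.sqrt (cwQ u))⁻¹ • (cwpr (γ + 1) + cwpr (γ + 2) - cwpr γ)) u := by
  have hpr : ∀ i : Fin 3, HasFDerivAt (fun v : Fin 3 → ℝ => v i) (cwpr i) u := fun i =>
    (cwpr i).hasFDerivAt
  have hS : HasFDerivAt (fun v => cwS γ v) (cwpr (γ + 1) + cwpr (γ + 2) - cwpr γ) u := by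
    have := ((hpr (γ + 1)).add (hpr (γ + 2))).sub (hpr γ)
    exact this
  have hsqrt : HasFDerivAt (fun v => Real.sqrt (cwQ v))
      ((1 / (2 * Real.sqrt (cwQ u))) •
        ((2 * cwS 0 u) • cwpr 0 + (2 * cwS 1 u) • cwpr 1 + (2 * cwS 2 u) • cwpr 2)) u :=
    (hasFDerivAt_cwQ u).sqrt hQ.ne'
  have hne : Real.sqrt (cwQ u) ≠ 0 := (Real.sqrt_pos.2 hQ).ne'
  have hinv := (hasDerivAt_inv hne).comp_hasFDerivAt u hsqrt
  exact hS.mul hinv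

lemma cwpr_single (i δ : Fin 3) : cwpr i (Pi.single δ 1) = if i = δ then (1 : ℝ) else 0 := by
  simp [cwpr, Pi.single_apply]

lemma cw_eps (γ δ : Fin 3) :
    ((if (γ + 1 : Fin 3) = δ then (1 : ℝ) else 0) + (if (γ + 2 : Fin 3) = δ then 1 else 0)
      - (if γ = δ then 1 else 0)) = if γ = δ then -1 else 1 := by
  fin_cases γ <;> fin_cases δ <;> simp (config := { decide := true })

/-- The key computation of the partial derivative. -/
lemma cw_fderiv (u : Fin 3 → ℝ) (hu : u ∈ triOmega) (γ δ : Fin 3) :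
    fderiv ℝ (triWeight γ) u (Pi.single δ 1) =
      (if γ = δ then (-1 : ℝ) else 1) / Real.sqrt (cwQ u)
        - cwS γ u * cwS δ u / Real.sqrt (cwQ u) ^ 3 := by
  have hQ : 0 < cwQ u := cwQ_pos hu
  have hpos := hu.1
  -- the set where the closed form is valid, is open
  have hU : IsOpen {v : Fin 3 → ℝ | (∀ i, 0 < v i) ∧ 0 < cwQ v} := by
    have h1 : IsOpen {v : Fin 3 → ℝ | ∀ i, 0 < v i} := by
      have : {v : Fin 3 → ℝ | ∀ i, 0 < v i} = ⋂ i, {v | 0 < v i} := by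
        ext v; simp
      rw [this]
      exact isOpen_iInter_of_finite fun i =>
        isOpen_lt continuous_const (continuous_apply i)
    have h2 : IsOpen {v : Fin 3 → ℝ | 0 < cwQ v} := by
      apply isOpen_lt continuous_const
      unfold cwQ
      fun_prop
    exact h1.inter h2
  have hmem : u ∈ {v : Fin 3 → ℝ | (∀ i, 0 < v i) ∧ 0 < cwQ v} := ⟨hpos, hQ⟩
  have heq : triWeight γ =ᶠ[nhds u] fun v => cwS γ v * (Real.sqrt (cwQ v))⁻¹ := by
    filter_upwards [hU.mem_nhds hmem] with v hv
    exact triWeight_eq v hv.1 hv.2 γ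
  rw [heq.fderiv_eq, (hasFDerivAt_weight u hQ γ).fderiv]
  have hne : Real.sqrt (cwQ u) ≠ 0 := (Real.sqrt_pos.2 hQ).ne'
  have hQs : Real.sqrt (cwQ u) ^ 2 = cwQ u := Real.sq_sqrt hQ.le
  simp only [ContinuousLinearMap.add_apply, ContinuousLinearMap.sub_apply,
    ContinuousLinearMap.smul_apply, cwpr_single, smul_eq_mul]
  rw [show ((if (γ + 1 : Fin 3) = δ then (1 : ℝ) else 0) + (if (γ + 2 : Fin 3) = δ then 1 else 0)
      - (if γ = δ then 1 else 0)) = if γ = δ then -1 else 1 from cw_eps γ δ]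
  have hDQ : 2 * cwS 0 u * (if (0 : Fin 3) = δ then (1:ℝ) else 0)
      + 2 * cwS 1 u * (if (1 : Fin 3) = δ then 1 else 0)
      + 2 * cwS 2 u * (if (2 : Fin 3) = δ then 1 else 0) = 2 * cwS δ u := by
    fin_cases δ <;> simp
  rw [hDQ]
  set s := Real.sqrt (cwQ u) with hsdef
  field_simp
  split_ifs <;> ring

/-- The mixed partial derivatives of the cotangent weights are
symmetric: `∂W_α/∂u_β = ∂W_β/∂u_α` on the admissible metric space. -/
theorem cot_weight_partial_symm (u : Fin 3 → ℝ) (hu : u ∈ triOmega) (α β : Fin 3) :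
    fderiv ℝ (triWeight α) u (Pi.single β 1) = fderiv ℝ (triWeight β) u (Pi.single α 1) := by
  rw [cw_fderiv u hu α β, cw_fderiv u hu β α]
  rw [show (if α = β then (-1 : ℝ) else 1) = (if β = α then -1 else 1) by
    simp [eq_comm]]
  ring
end

section
/- Let Ω = {u ∈ ℝ³ : u₁, u₂, u₃ > 0 and √u₁, √u₂, √u₃ satisfy the strict triangle inequalities}. For u ∈ Ω and α ∈ {1,2,3}, let W_α(u) = cot θ_α, where θ_α is the angle opposite the side of length d_α = √(2 u_α) in the Euclidean triangle with side lengths d₁, d₂, d₃. Then for distinct α, β with third index γ, ∂W_α/∂u_β (u) = (2R²/A) · cos θ_γ/(d_α d_β), where A is the area of the triangle and R = d_α/(2 sin θ_α) is its circumradius. -/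
set_option maxHeartbeats 1000000


/-- The area of the triangle, `A = (1/2) d_β d_γ sin θ_α` (computed with `α = 0`). -/
noncomputable def triArea (u : Fin 3 → ℝ) : ℝ :=
  (1 / 2) * triEdge u 1 * triEdge u 2 * Real.sin (triAngle u 0)

/-- The circumradius of the triangle, `R = d_α / (2 sin θ_α)` (computed with `α = 0`). -/
noncomputable def triCircumradius (u : Fin 3 → ℝ) : ℝ :=
  triEdge u 0 / (2 * Real.sin (triAngle u 0))

/-- The polynomial `Q = 4 A²`. -/
noncomputable def Qpoly (v : Fin 3 → ℝ) : ℝ :=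
  2 * (v 0 * v 1 + (v 1 * v 2 + v 2 * v 0)) - (v 0 * v 0 + (v 1 * v 1 + v 2 * v 2))

lemma isOpen_triOmega : IsOpen triOmega := by
  have h : triOmega = (⋂ α : Fin 3, {u : Fin 3 → ℝ | 0 < u α}) ∩
      ⋂ α : Fin 3, {u : Fin 3 → ℝ |
        Real.sqrt (u α) < Real.sqrt (u (α + 1)) + Real.sqrt (u (α + 2))} := by
    ext u; simp [triOmega, Set.mem_iInter]
  rw [h]
  refine IsOpen.inter ?_ ?_ <;> refine isOpen_iInter_of_finite fun α => ?_
  · exact isOpen_lt continuous_const (continuous_apply α)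
  · exact isOpen_lt (Real.continuous_sqrt.comp (continuous_apply α))
      ((Real.continuous_sqrt.comp (continuous_apply _)).add
        (Real.continuous_sqrt.comp (continuous_apply _)))

lemma Qpoly_pos {u : Fin 3 → ℝ} (hu : u ∈ triOmega) : 0 < Qpoly u := by
  obtain ⟨hp, ht⟩ := hu
  set s : Fin 3 → ℝ := fun i => Real.sqrt (u i) with hs
  have hsq : ∀ i, s i ^ 2 = u i := fun i => Real.sq_sqrt (hp i).le
  have hspos : ∀ i, 0 < s i := fun i => Real.sqrt_pos.2 (hp i)
  have h0 : s 0 < s 1 + s 2 := ht 0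
  have h1 : s 1 < s 2 + s 0 := ht 1
  have h2 : s 2 < s 0 + s 1 := ht 2
  have key : Qpoly u =
      (s 0 + s 1 + s 2) * ((s 1 + s 2 - s 0) * ((s 2 + s 0 - s 1) * (s 0 + s 1 - s 2))) := by
    rw [Qpoly, ← hsq 0, ← hsq 1, ← hsq 2]; ring
  rw [key]
  have p0 := hspos 0; have p1 := hspos 1; have p2 := hspos 2
  exact mul_pos (by linarith) (mul_pos (by linarith) (mul_pos (by linarith) (by linarith)))

lemma cos_sin_aux {a b c : ℝ} (ha : 0 ≤ a) (hb : 0 < b) (hc : 0 < c)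
    (hQ : 0 < 4 * b * c - (b + c - a) ^ 2) :
    Real.cos (Real.arccos ((Real.sqrt (2 * b) ^ 2 + Real.sqrt (2 * c) ^ 2 -
        Real.sqrt (2 * a) ^ 2) / (2 * Real.sqrt (2 * b) * Real.sqrt (2 * c)))) =
      (b + c - a) / (Real.sqrt (2 * b) * Real.sqrt (2 * c)) ∧
    Real.sin (Real.arccos ((Real.sqrt (2 * b) ^ 2 + Real.sqrt (2 * c) ^ 2 -
        Real.sqrt (2 * a) ^ 2) / (2 * Real.sqrt (2 * b) * Real.sqrt (2 * c)))) =
      Real.sqrt (4 * b * c - (b + c - a) ^ 2) / (Real.sqrt (2 * b) * Real.sqrt (2 * c)) := by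
  set B := Real.sqrt (2 * b) with hB
  set C := Real.sqrt (2 * c) with hC
  have hB2 : B ^ 2 = 2 * b := Real.sq_sqrt (by linarith)
  have hC2 : C ^ 2 = 2 * c := Real.sq_sqrt (by linarith)
  have hBpos : 0 < B := Real.sqrt_pos.2 (by linarith)
  have hCpos : 0 < C := Real.sqrt_pos.2 (by linarith)
  have hA2 : Real.sqrt (2 * a) ^ 2 = 2 * a := Real.sq_sqrt (by linarith)
  have harg : (B ^ 2 + C ^ 2 - Real.sqrt (2 * a) ^ 2) / (2 * B * C)
      = (b + c - a) / (B * C) := by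
    rw [hB2, hC2, hA2]; field_simp
  set X := (b + c - a) / (B * C) with hX
  have hBC2 : (B * C) ^ 2 = 4 * b * c := by rw [mul_pow, hB2, hC2]; ring
  have hX2 : 1 - X ^ 2 = (4 * b * c - (b + c - a) ^ 2) / (B * C) ^ 2 := by
    rw [hX, div_pow, hBC2]
    field_simp
  have hXsq : X ^ 2 ≤ 1 := by
    have h4 : 0 < (B * C) ^ 2 := by positivity
    have h5 : 0 < 1 - X ^ 2 := hX2 ▸ div_pos hQ h4
    linarith
  have hX1 : -1 ≤ X := by nlinarith [sq_nonneg (X + 1)]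
  have hX1' : X ≤ 1 := by nlinarith [sq_nonneg (X - 1)]
  rw [harg]
  constructor
  · exact Real.cos_arccos hX1 hX1'
  · rw [Real.sin_arccos, hX2, Real.sqrt_div hQ.le, Real.sqrt_sq (by positivity : (0:ℝ) ≤ B * C)]

lemma hQ4 (u : Fin 3 → ℝ) (α : Fin 3) :
    4 * u (α + 1) * u (α + 2) - (u (α + 1) + u (α + 2) - u α) ^ 2 = Qpoly u := by
  fin_cases α
  · show 4 * u 1 * u 2 - (u 1 + u 2 - u 0) ^ 2 = _; rw [Qpoly]; ring
  · show 4 * u 2 * u 0 - (u 2 + u 0 - u 1) ^ 2 = _; rw [Qpoly]; ring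
  · show 4 * u 0 * u 1 - (u 0 + u 1 - u 2) ^ 2 = _; rw [Qpoly]; ring

lemma tri_cos_sin (u : Fin 3 → ℝ) (hu : u ∈ triOmega) (α : Fin 3) :
    Real.cos (triAngle u α) =
      (u (α + 1) + u (α + 2) - u α) / (triEdge u (α + 1) * triEdge u (α + 2)) ∧
    Real.sin (triAngle u α) =
      Real.sqrt (Qpoly u) / (triEdge u (α + 1) * triEdge u (α + 2)) := by
  have h4 := hQ4 u α
  have h := cos_sin_aux (hu.1 α).le (hu.1 (α + 1)) (hu.1 (α + 2)) (h4 ▸ Qpoly_pos hu)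
  rw [h4] at h
  exact h

lemma weight_eq (u : Fin 3 → ℝ) (hu : u ∈ triOmega) (α : Fin 3) :
    triWeight α u = (u (α + 1) + u (α + 2) - u α) * (Real.sqrt (Qpoly u))⁻¹ := by
  obtain ⟨hc, hs⟩ := tri_cos_sin u hu α
  have hQ := Qpoly_pos hu
  have hsq : Real.sqrt (Qpoly u) ≠ 0 := (Real.sqrt_pos.2 hQ).ne'
  have he1 : (0:ℝ) < triEdge u (α + 1) := Real.sqrt_pos.2 (by linarith [hu.1 (α + 1)])
  have he2 : (0:ℝ) < triEdge u (α + 2) := Real.sqrt_pos.2 (by linarith [hu.1 (α + 2)])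
  rw [triWeight, Real.cot_eq_cos_div_sin, hc, hs]
  field_simp

/-- For distinct indices `α, β` with third index `γ`,
`∂W_α/∂u_β = (2R²/A) · cos θ_γ/(d_α d_β)`, where `A` is the area and `R` the
circumradius of the triangle. -/
theorem cot_weight_partial_formula (u : Fin 3 → ℝ) (hu : u ∈ triOmega)
    (α β γ : Fin 3) (hαβ : α ≠ β) (hγα : γ ≠ α) (hγβ : γ ≠ β) :
    fderiv ℝ (triWeight α) u (Pi.single β 1) =
      (2 * triCircumradius u ^ 2 / triArea u) *
        Real.cos (triAngle u γ) / (triEdge u α * triEdge u β) := by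
  have hQ0 := Qpoly_pos hu
  have hp : ∀ i, 0 < u i := hu.1
  have hperm : (α = 0 ∧ β = 1 ∧ γ = 2) ∨ (α = 0 ∧ β = 2 ∧ γ = 1) ∨
      (α = 1 ∧ β = 0 ∧ γ = 2) ∨ (α = 1 ∧ β = 2 ∧ γ = 0) ∨
      (α = 2 ∧ β = 0 ∧ γ = 1) ∨ (α = 2 ∧ β = 1 ∧ γ = 0) := by
    revert hαβ hγα hγβ; fin_cases α <;> fin_cases β <;> fin_cases γ <;> decide
  have hE2 : ∀ i : Fin 3, triEdge u i ^ 2 = 2 * u i :=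
    fun i => Real.sq_sqrt (by linarith [hp i])
  have hEpos : ∀ i : Fin 3, 0 < triEdge u i :=
    fun i => Real.sqrt_pos.2 (by linarith [hp i])
  set q := Real.sqrt (Qpoly u) with hqdef
  have hqpos : 0 < q := Real.sqrt_pos.2 hQ0
  have hqne : q ≠ 0 := hqpos.ne'
  have hq2 : q ^ 2 = 2 * (u α * u β + (u β * u γ + u γ * u α)) -
      (u α * u α + (u β * u β + u γ * u γ)) := by
    rw [hqdef, Real.sq_sqrt hQ0.le, Qpoly]
    rcases hperm with ⟨rfl, rfl, rfl⟩ | ⟨rfl, rfl, rfl⟩ | ⟨rfl, rfl, rfl⟩ |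
      ⟨rfl, rfl, rfl⟩ | ⟨rfl, rfl, rfl⟩ | ⟨rfl, rfl, rfl⟩ <;> ring
  obtain ⟨hcγ, hsγ⟩ := tri_cos_sin u hu γ
  obtain ⟨hc0, hs0⟩ := tri_cos_sin u hu 0
  have hs0' : Real.sin (triAngle u 0) = q / (triEdge u 1 * triEdge u 2) := by
    simpa only [Fin.reduceAdd] using hs0
  have hEne : ∀ i : Fin 3, triEdge u i ≠ 0 := fun i => (hEpos i).ne'
  have hE1 := hEne 1; have hE2' := hEne 2
  have hR : triCircumradius u = triEdge u 0 * triEdge u 1 * triEdge u 2 / (2 * q) := by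
    rw [triCircumradius, hs0']
    field_simp
  have hA : triArea u = q / 2 := by
    rw [triArea, hs0']
    field_simp
  -- derivative computation
  have heq : triWeight α =ᶠ[nhds u]
      fun v => (v (α + 1) + v (α + 2) - v α) * (Real.sqrt (Qpoly v))⁻¹ :=
    Filter.eventuallyEq_of_mem (isOpen_triOmega.mem_nhds hu) fun v hv => weight_eq v hv α
  rw [heq.fderiv_eq]
  have hproj : ∀ i : Fin 3, HasFDerivAt (𝕜 := ℝ) (fun v : Fin 3 → ℝ => v i)
      (ContinuousLinearMap.proj i) u := fun i => hasFDerivAt_apply i u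
  set DQ : (Fin 3 → ℝ) →L[ℝ] ℝ :=
    (2:ℝ) • (u 0 • ContinuousLinearMap.proj 1 + u 1 • ContinuousLinearMap.proj 0 +
      (u 1 • ContinuousLinearMap.proj 2 + u 2 • ContinuousLinearMap.proj 1 +
        (u 2 • ContinuousLinearMap.proj 0 + u 0 • ContinuousLinearMap.proj 2))) -
    (u 0 • ContinuousLinearMap.proj 0 + u 0 • ContinuousLinearMap.proj 0 +
      (u 1 • ContinuousLinearMap.proj 1 + u 1 • ContinuousLinearMap.proj 1 +
        (u 2 • ContinuousLinearMap.proj 2 + u 2 • ContinuousLinearMap.proj 2))) with hDQdef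
  have hLval : (Pi.single β 1 : Fin 3 → ℝ) (α + 1) + (Pi.single β 1 : Fin 3 → ℝ) (α + 2) -
      (Pi.single β 1 : Fin 3 → ℝ) α = (1:ℝ) := by
    rcases hperm with ⟨rfl, rfl, rfl⟩ | ⟨rfl, rfl, rfl⟩ | ⟨rfl, rfl, rfl⟩ | ⟨rfl, rfl, rfl⟩ | ⟨rfl, rfl, rfl⟩ | ⟨rfl, rfl, rfl⟩ <;>
      simp [Pi.single_apply]
  have hDQval : DQ (Pi.single β 1) = 2 * (u α + u γ - u β) := by
    rw [hDQdef]
    rcases hperm with ⟨rfl, rfl, rfl⟩ | ⟨rfl, rfl, rfl⟩ | ⟨rfl, rfl, rfl⟩ | ⟨rfl, rfl, rfl⟩ | ⟨rfl, rfl, rfl⟩ | ⟨rfl, rfl, rfl⟩ <;>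
      simp [ContinuousLinearMap.add_apply, ContinuousLinearMap.smul_apply,
        ContinuousLinearMap.coe_sub', Pi.sub_apply, ContinuousLinearMap.proj_apply,
        smul_eq_mul, Pi.single_apply] <;> ring
  have hsumα : u (α + 1) + u (α + 2) = u β + u γ := by
    rcases hperm with ⟨rfl, rfl, rfl⟩ | ⟨rfl, rfl, rfl⟩ | ⟨rfl, rfl, rfl⟩ | ⟨rfl, rfl, rfl⟩ | ⟨rfl, rfl, rfl⟩ | ⟨rfl, rfl, rfl⟩ <;> simp only [Fin.reduceAdd] <;> ring
  have hsumγ : u (γ + 1) + u (γ + 2) = u α + u β := by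
    rcases hperm with ⟨rfl, rfl, rfl⟩ | ⟨rfl, rfl, rfl⟩ | ⟨rfl, rfl, rfl⟩ | ⟨rfl, rfl, rfl⟩ | ⟨rfl, rfl, rfl⟩ | ⟨rfl, rfl, rfl⟩ <;> simp only [Fin.reduceAdd] <;> ring
  have hEprodγ : triEdge u (γ + 1) * triEdge u (γ + 2) = triEdge u α * triEdge u β := by
    rcases hperm with ⟨rfl, rfl, rfl⟩ | ⟨rfl, rfl, rfl⟩ | ⟨rfl, rfl, rfl⟩ | ⟨rfl, rfl, rfl⟩ | ⟨rfl, rfl, rfl⟩ | ⟨rfl, rfl, rfl⟩ <;> simp only [Fin.reduceAdd] <;> ring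
  have hp2 : (triEdge u 0 * triEdge u 1 * triEdge u 2) ^ 2 = 8 * (u α * (u β * u γ)) := by
    rw [mul_pow, mul_pow, hE2 0, hE2 1, hE2 2]
    rcases hperm with ⟨rfl, rfl, rfl⟩ | ⟨rfl, rfl, rfl⟩ | ⟨rfl, rfl, rfl⟩ | ⟨rfl, rfl, rfl⟩ | ⟨rfl, rfl, rfl⟩ | ⟨rfl, rfl, rfl⟩ <;> ring
  have hw2 : (triEdge u α * triEdge u β) ^ 2 = 4 * (u α * u β) := by
    rw [mul_pow, hE2 α, hE2 β]; ring
  have hwne : triEdge u α * triEdge u β ≠ 0 := mul_ne_zero (hEne α) (hEne β)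
  have hQd : HasFDerivAt Qpoly DQ u :=
    ((((hproj 0).mul (hproj 1)).add (((hproj 1).mul (hproj 2)).add
      ((hproj 2).mul (hproj 0)))).const_mul (2:ℝ)).sub
      ((((hproj 0).mul (hproj 0)).add (((hproj 1).mul (hproj 1)).add
        ((hproj 2).mul (hproj 2)))))
  have hsqrtd := (Real.hasDerivAt_sqrt hQ0.ne').comp_hasFDerivAt u hQd
  have hinvd := (hasDerivAt_inv hqne).comp_hasFDerivAt u hsqrtd
  have hNd := ((hproj (α + 1)).add (hproj (α + 2))).sub (hproj α)
  have hgd : HasFDerivAt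
      (fun v : Fin 3 → ℝ => (v (α + 1) + v (α + 2) - v α) * (Real.sqrt (Qpoly v))⁻¹) _ u :=
    hNd.mul hinvd
  rw [hgd.fderiv]
  simp only [ContinuousLinearMap.add_apply, ContinuousLinearMap.smul_apply,
    ContinuousLinearMap.coe_sub', Pi.sub_apply, ContinuousLinearMap.coe_smul', Pi.smul_apply,
    ContinuousLinearMap.proj_apply, smul_eq_mul, Function.comp_apply, Pi.add_apply]
  rw [← hqdef]
  rw [hDQval, hLval, hR, hA, hcγ, hsumα, hsumγ, hEprodγ]
  rw [div_pow, hp2]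
  have hEa := hEne α; have hEb := hEne β
  field_simp
  linear_combination (4 * u α * u β) * hq2 +
    (q ^ 2 - (u β + u γ - u α) * (u α + u γ - u β)) * hw2
end

section
/- Let Ω = {u ∈ ℝ³ : u₁, u₂, u₃ > 0 and √u₁, √u₂, √u₃ satisfy the strict triangle inequalities}, and for u ∈ Ω let W_α(u) = cot θ_α, where θ_α is the angle opposite the side of length d_α = √(2 u_α) in the Euclidean triangle with side lengths d₁, d₂, d₃. Then the 1-form Σ_α W_α du_α is exact on Ω: there exists a differentiable function E : Ω → ℝ such that ∂E/∂u_α (u) = W_α(u) for every u ∈ Ω and α ∈ {1,2,3}. -/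
private lemma Qpos (a b c : ℝ) (ha : 0 < a) (hb : 0 < b) (hc : 0 < c)
    (h1 : Real.sqrt a < Real.sqrt b + Real.sqrt c)
    (h2 : Real.sqrt b < Real.sqrt c + Real.sqrt a)
    (h3 : Real.sqrt c < Real.sqrt a + Real.sqrt b) :
    0 < 2*(a*b+b*c+c*a) - a^2 - b^2 - c^2 := by
  set x := Real.sqrt a
  set y := Real.sqrt b
  set z := Real.sqrt c
  have hx : x^2 = a := Real.sq_sqrt ha.le
  have hy : y^2 = b := Real.sq_sqrt hb.le
  have hz : z^2 = c := Real.sq_sqrt hc.le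
  have hx0 : 0 < x := Real.sqrt_pos.mpr ha
  have hy0 : 0 < y := Real.sqrt_pos.mpr hb
  have hz0 : 0 < z := Real.sqrt_pos.mpr hc
  nlinarith [mul_pos (mul_pos (sub_pos.mpr h1) (sub_pos.mpr h2)) (sub_pos.mpr h3),
    mul_pos (add_pos (add_pos hx0 hy0) hz0)
      (mul_pos (mul_pos (sub_pos.mpr h1) (sub_pos.mpr h2)) (sub_pos.mpr h3))]

private lemma cot_formula (a b c : ℝ) (ha : 0 < a) (hb : 0 < b) (hc : 0 < c)
    (hQ : 0 < 2*(a*b+b*c+c*a) - a^2 - b^2 - c^2) :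
    Real.cot (Real.arccos ((Real.sqrt (2*b) ^ 2 + Real.sqrt (2*c) ^ 2 - Real.sqrt (2*a) ^ 2) /
      (2 * Real.sqrt (2*b) * Real.sqrt (2*c)))) =
    (b + c - a) / Real.sqrt (2*(a*b+b*c+c*a) - a^2 - b^2 - c^2) := by
  set Q := 2*(a*b+b*c+c*a) - a^2 - b^2 - c^2 with hQdef
  have hsb : Real.sqrt (2*b) ^ 2 = 2*b := Real.sq_sqrt (by linarith)
  have hsc : Real.sqrt (2*c) ^ 2 = 2*c := Real.sq_sqrt (by linarith)
  have hsa : Real.sqrt (2*a) ^ 2 = 2*a := Real.sq_sqrt (by linarith)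
  have hb0 : 0 < Real.sqrt (2*b) := Real.sqrt_pos.mpr (by linarith)
  have hc0 : 0 < Real.sqrt (2*c) := Real.sqrt_pos.mpr (by linarith)
  set D := 2 * Real.sqrt (2*b) * Real.sqrt (2*c) with hDdef
  have hD0 : 0 < D := by positivity
  have hD2 : D^2 = 16*(b*c) := by
    rw [hDdef, mul_pow, mul_pow, hsb, hsc]; ring
  set x := (Real.sqrt (2*b) ^ 2 + Real.sqrt (2*c) ^ 2 - Real.sqrt (2*a) ^ 2) / D with hxdef
  have hxval : x = (2*(b+c-a)) / D := by rw [hxdef, hsa, hsb, hsc]; ring_nf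
  have hone : 1 - x^2 = 4*Q / D^2 := by
    rw [hxval, div_pow]
    rw [eq_div_iff (by positivity), sub_mul, div_mul_eq_mul_div, mul_div_assoc,
      div_self (by positivity : D^2 ≠ 0), mul_one, hD2]; ring
  have hQs : 0 < Real.sqrt Q := Real.sqrt_pos.mpr hQ
  have hQsq : Real.sqrt Q ^ 2 = Q := Real.sq_sqrt hQ.le
  have habs : x^2 < 1 := by nlinarith [div_pos (by linarith : (0:ℝ) < 4*Q) (pow_pos hD0 2)]
  have hx1 : -1 ≤ x := by nlinarith
  have hx2 : x ≤ 1 := by nlinarith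
  have hsqrt1 : Real.sqrt (1 - x^2) = 2 * Real.sqrt Q / D := by
    have h4 : (2 * Real.sqrt Q / D)^2 = 4*Q/D^2 := by
      rw [div_pow, mul_pow, hQsq]; norm_num
    rw [hone, ← h4]
    exact Real.sqrt_sq (by positivity)
  rw [Real.cot_eq_cos_div_sin, Real.cos_arccos hx1 hx2, Real.sin_arccos, hsqrt1, hxval]
  rw [div_eq_div_iff (by positivity) (by positivity)]
  field_simp

/-- The 1-form `Σ_α W_α du_α` is exact on the admissible metric
space: there is a differentiable function `E` with `∂E/∂u_α = W_α` there. -/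
theorem cot_weight_one_form_exact :
    ∃ E : (Fin 3 → ℝ) → ℝ, ∀ u ∈ triOmega, DifferentiableAt ℝ E u ∧
      ∀ α : Fin 3, fderiv ℝ E u (Pi.single α 1) = triWeight α u := by
  refine ⟨fun v => Real.sqrt (2*(v 0 * v 1 + v 1 * v 2 + v 2 * v 0) - v 0 * v 0 - v 1 * v 1 - v 2 * v 2),
    fun u hu => ?_⟩
  obtain ⟨hpos, htri⟩ := hu
  have hQp : 0 < 2*(u 0 * u 1 + u 1 * u 2 + u 2 * u 0) - u 0^2 - u 1^2 - u 2^2 := by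
    have := Qpos (u 0) (u 1) (u 2) (hpos 0) (hpos 1) (hpos 2) (htri 0) (htri 1) (htri 2)
    linarith
  have hQ : 0 < 2*(u 0 * u 1 + u 1 * u 2 + u 2 * u 0) - u 0 * u 0 - u 1 * u 1 - u 2 * u 2 := by
    nlinarith [hQp]
  have hp : ∀ i : Fin 3, HasFDerivAt (fun v : Fin 3 → ℝ => v i)
      ((ContinuousLinearMap.proj i : (Fin 3 → ℝ) →L[ℝ] ℝ)) u :=
    fun i => (ContinuousLinearMap.proj i : (Fin 3 → ℝ) →L[ℝ] ℝ).hasFDerivAt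
  have hQd : HasFDerivAt
      (fun v : Fin 3 → ℝ => 2*(v 0 * v 1 + v 1 * v 2 + v 2 * v 0) - v 0 * v 0 - v 1 * v 1 - v 2 * v 2)
      ((2:ℝ) • (u 0 • (ContinuousLinearMap.proj 1 : (Fin 3 → ℝ) →L[ℝ] ℝ) + u 1 • ContinuousLinearMap.proj 0 +
        (u 1 • ContinuousLinearMap.proj 2 + u 2 • ContinuousLinearMap.proj 1) +
        (u 2 • ContinuousLinearMap.proj 0 + u 0 • ContinuousLinearMap.proj 2)) -
        (u 0 • ContinuousLinearMap.proj 0 + u 0 • ContinuousLinearMap.proj 0) -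
        (u 1 • ContinuousLinearMap.proj 1 + u 1 • ContinuousLinearMap.proj 1) -
        (u 2 • ContinuousLinearMap.proj 2 + u 2 • ContinuousLinearMap.proj 2)) u := by
    exact (((((hp 0).mul (hp 1)).add ((hp 1).mul (hp 2))).add
      ((hp 2).mul (hp 0))).const_smul (2:ℝ)).sub ((hp 0).mul (hp 0)) |>.sub ((hp 1).mul (hp 1))
      |>.sub ((hp 2).mul (hp 2))
  have hE := hQd.sqrt hQ.ne'
  have hs : 0 < Real.sqrt (2*(u 0 * u 1 + u 1 * u 2 + u 2 * u 0) - u 0 * u 0 - u 1 * u 1 - u 2 * u 2) :=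
    Real.sqrt_pos.mpr hQ
  refine ⟨hE.differentiableAt, fun α => ?_⟩
  rw [hE.fderiv]
  fin_cases α <;>
    simp only [Fin.zero_eta, Fin.mk_one, Fin.reduceFinMk, ContinuousLinearMap.smul_apply, ContinuousLinearMap.sub_apply,
      ContinuousLinearMap.add_apply, ContinuousLinearMap.proj_apply, Pi.single_apply,
      Fin.isValue, Fin.reduceEq, if_true, if_false, ite_true, ite_false, smul_eq_mul,
      mul_one, mul_zero, add_zero, zero_add, triWeight, triAngle, triEdge, Fin.reduceAdd]
  · rw [cot_formula (u 0) (u 1) (u 2) (hpos 0) (hpos 1) (hpos 2) hQp]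
    rw [show 2*(u 0 * u 1 + u 1 * u 2 + u 2 * u 0) - u 0 * u 0 - u 1 * u 1 - u 2 * u 2
      = 2*(u 0 * u 1 + u 1 * u 2 + u 2 * u 0) - u 0^2 - u 1^2 - u 2^2 by ring] at hs ⊢
    rw [eq_div_iff hs.ne']
    have hsq := Real.sq_sqrt (le_of_lt ‹_› : (0:ℝ) ≤ _)
    field_simp
    ring_nf at hs ⊢
    simp only [mul_inv_cancel_right₀ hs.ne']
  · rw [cot_formula (u 1) (u 2) (u 0) (hpos 1) (hpos 2) (hpos 0) (by linarith)]
    rw [show 2*(u 0 * u 1 + u 1 * u 2 + u 2 * u 0) - u 0 * u 0 - u 1 * u 1 - u 2 * u 2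
      = 2*(u 1 * u 2 + u 2 * u 0 + u 0 * u 1) - u 1^2 - u 2^2 - u 0^2 by ring] at hs ⊢
    rw [eq_div_iff hs.ne']
    have hsq := Real.sq_sqrt (le_of_lt ‹_› : (0:ℝ) ≤ _)
    field_simp
    ring_nf at hs ⊢
    simp only [mul_inv_cancel_right₀ hs.ne']
  · rw [cot_formula (u 2) (u 0) (u 1) (hpos 2) (hpos 0) (hpos 1) (by linarith)]
    rw [show 2*(u 0 * u 1 + u 1 * u 2 + u 2 * u 0) - u 0 * u 0 - u 1 * u 1 - u 2 * u 2
      = 2*(u 2 * u 0 + u 0 * u 1 + u 1 * u 2) - u 2^2 - u 0^2 - u 1^2 by ring] at hs ⊢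
    rw [eq_div_iff hs.ne']
    have hsq := Real.sq_sqrt (le_of_lt ‹_› : (0:ℝ) ≤ _)
    field_simp
    ring_nf at hs ⊢
    simp only [mul_inv_cancel_right₀ hs.ne']
end

section
/- The set Ω_u = {(u₁, u₂, u₃) ∈ ℝ³ : u₁, u₂, u₃ > 0, √u₁ + √u₂ > √u₃, √u₂ + √u₃ > √u₁, √u₃ + √u₁ > √u₂, and u₁ + u₂ + u₃ = 3} is a convex subset of ℝ³. -/
/-- Concavity of the geometric mean (two-point version). -/
lemma geo_mean_concave {p q p' q' a b : ℝ} (hp : 0 ≤ p) (hq : 0 ≤ q)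
    (hp' : 0 ≤ p') (hq' : 0 ≤ q') (ha : 0 ≤ a) (hb : 0 ≤ b) :
    a * (Real.sqrt p * Real.sqrt q) + b * (Real.sqrt p' * Real.sqrt q') ≤
      Real.sqrt (a * p + b * p') * Real.sqrt (a * q + b * q') := by
  rw [show Real.sqrt (a * p + b * p') * Real.sqrt (a * q + b * q')
      = Real.sqrt ((a * p + b * p') * (a * q + b * q')) from
      (Real.sqrt_mul (by positivity) _).symm]
  rw [show a * (Real.sqrt p * Real.sqrt q) + b * (Real.sqrt p' * Real.sqrt q')
      = Real.sqrt ((a * (Real.sqrt p * Real.sqrt q) + b * (Real.sqrt p' * Real.sqrt q'))^2) from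
      (Real.sqrt_sq (by positivity)).symm]
  apply Real.sqrt_le_sqrt
  have e1 := Real.sq_sqrt hp
  have e2 := Real.sq_sqrt hq
  have e3 := Real.sq_sqrt hp'
  have e4 := Real.sq_sqrt hq'
  have s1 := Real.sqrt_nonneg p
  have s2 := Real.sqrt_nonneg q
  have s3 := Real.sqrt_nonneg p'
  have s4 := Real.sqrt_nonneg q'
  conv_rhs => rw [← e1, ← e2, ← e3, ← e4]
  nlinarith [mul_nonneg (mul_nonneg ha hb)
    (sq_nonneg (Real.sqrt p * Real.sqrt q' - Real.sqrt p' * Real.sqrt q))]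

/-- Stability of the strict triangle inequality (in squared variables) under convex
combinations. -/
lemma tri_combo {p q r p' q' r' a b : ℝ} (hp : 0 < p) (hq : 0 < q) (hr : 0 < r)
    (hp' : 0 < p') (hq' : 0 < q') (hr' : 0 < r')
    (ha : 0 ≤ a) (hb : 0 ≤ b) (hab : a + b = 1)
    (h1 : Real.sqrt r < Real.sqrt p + Real.sqrt q)
    (h2 : Real.sqrt r' < Real.sqrt p' + Real.sqrt q') :
    Real.sqrt (a * r + b * r') < Real.sqrt (a * p + b * p') + Real.sqrt (a * q + b * q') := by
  rcases ha.lt_or_eq with ha0 | ha0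
  swap
  · have hb1 : b = 1 := by linarith
    simp only [← ha0, hb1, zero_mul, one_mul, zero_add]
    exact h2
  have H1 : r < p + q + 2 * (Real.sqrt p * Real.sqrt q) := by
    nlinarith [Real.sq_sqrt hr.le, Real.sq_sqrt hp.le, Real.sq_sqrt hq.le,
      pow_lt_pow_left₀ h1 (Real.sqrt_nonneg r) two_ne_zero]
  have H2 : r' < p' + q' + 2 * (Real.sqrt p' * Real.sqrt q') := by
    nlinarith [Real.sq_sqrt hr'.le, Real.sq_sqrt hp'.le, Real.sq_sqrt hq'.le,
      pow_lt_pow_left₀ h2 (Real.sqrt_nonneg r') two_ne_zero]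
  have G := geo_mean_concave hp.le hq.le hp'.le hq'.le ha hb
  have eX := Real.sq_sqrt (show (0:ℝ) ≤ a * p + b * p' by positivity)
  have eY := Real.sq_sqrt (show (0:ℝ) ≤ a * q + b * q' by positivity)
  have hlt : a * r + b * r' <
      (Real.sqrt (a * p + b * p') + Real.sqrt (a * q + b * q'))^2 := by
    nlinarith [mul_lt_mul_of_pos_left H1 ha0, mul_le_mul_of_nonneg_left H2.le hb]
  calc Real.sqrt (a * r + b * r')
      < Real.sqrt ((Real.sqrt (a * p + b * p') + Real.sqrt (a * q + b * q'))^2) :=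
        Real.sqrt_lt_sqrt (by positivity) hlt
    _ = Real.sqrt (a * p + b * p') + Real.sqrt (a * q + b * q') :=
        Real.sqrt_sq (by positivity)

/-- The admissible metric space
`Ω_u = {(u₁,u₂,u₃) : u_α > 0, √u₁ + √u₂ > √u₃, √u₂ + √u₃ > √u₁, √u₃ + √u₁ > √u₂,
u₁ + u₂ + u₃ = 3}` is convex. -/
theorem admissible_metric_space_convex :
    Convex ℝ {u : Fin 3 → ℝ |
      (∀ α, 0 < u α) ∧
      Real.sqrt (u 2) < Real.sqrt (u 0) + Real.sqrt (u 1) ∧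
      Real.sqrt (u 0) < Real.sqrt (u 1) + Real.sqrt (u 2) ∧
      Real.sqrt (u 1) < Real.sqrt (u 2) + Real.sqrt (u 0) ∧
      u 0 + u 1 + u 2 = 3} := by
  intro x hx y hy a b ha hb hab
  obtain ⟨hxpos, hx1, hx2, hx3, hxs⟩ := hx
  obtain ⟨hypos, hy1, hy2, hy3, hys⟩ := hy
  have happ : ∀ i : Fin 3, (a • x + b • y) i = a * x i + b * y i := by
    intro i; simp [smul_eq_mul]
  refine ⟨?_, ?_, ?_, ?_, ?_⟩
  · intro α
    rw [happ]
    rcases ha.lt_or_eq with ha0 | ha0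
    · have := mul_pos ha0 (hxpos α)
      nlinarith [mul_nonneg hb (hypos α).le]
    · have hb1 : b = 1 := by linarith
      simp [← ha0, hb1]; exact hypos α
  · rw [happ, happ, happ]
    exact tri_combo (hxpos 0) (hxpos 1) (hxpos 2) (hypos 0) (hypos 1) (hypos 2)
      ha hb hab hx1 hy1
  · rw [happ, happ, happ]
    exact tri_combo (hxpos 1) (hxpos 2) (hxpos 0) (hypos 1) (hypos 2) (hypos 0)
      ha hb hab hx2 hy2
  · rw [happ, happ, happ]
    exact tri_combo (hxpos 2) (hxpos 0) (hxpos 1) (hypos 2) (hypos 0) (hypos 1)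
      ha hb hab hx3 hy3
  · rw [happ, happ, happ]
    nlinarith [hxs, hys]
end

section
/- Let m be a positive integer and let F be a finite set of faces, each face being a triple {i, j, k} of distinct indices in Fin m (edges). Then the admissible metric space Ω_u = {u : Fin m → ℝ : u_e > 0 for all e, Σ_e u_e = m, and for every face {i,j,k} ∈ F the numbers √(u_i), √(u_j), √(u_k) satisfy the strict triangle inequalities} is a convex subset of ℝ^m. -/
set_option maxHeartbeats 1000000 in
private lemma sqrt_combo_lt {a b p q p' q' p'' q'' : ℝ}
    (ha : 0 < a) (hb : 0 < b)
    (hp : 0 < p) (hq : 0 < q) (hp' : 0 < p') (hq' : 0 < q') (hp'' : 0 < p'') (hq'' : 0 < q'')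
    (hP : Real.sqrt p < Real.sqrt p' + Real.sqrt p'')
    (hQ : Real.sqrt q < Real.sqrt q' + Real.sqrt q'') :
    Real.sqrt (a * p + b * q) < Real.sqrt (a * p' + b * q') + Real.sqrt (a * p'' + b * q'') := by
  have sp := Real.sq_sqrt hp.le
  have sq' := Real.sq_sqrt hq.le
  have sp' := Real.sq_sqrt hp'.le
  have sp'' := Real.sq_sqrt hp''.le
  have sq1 := Real.sq_sqrt hq'.le
  have sq2 := Real.sq_sqrt hq''.le
  have np := Real.sqrt_nonneg p
  have nq := Real.sqrt_nonneg q
  have np' := Real.sqrt_nonneg p'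
  have np'' := Real.sqrt_nonneg p''
  have nq' := Real.sqrt_nonneg q'
  have nq'' := Real.sqrt_nonneg q''
  have hA : (0:ℝ) < a * p' + b * q' := by positivity
  have hB : (0:ℝ) < a * p'' + b * q'' := by positivity
  have sA := Real.sq_sqrt hA.le
  have sB := Real.sq_sqrt hB.le
  have nA := Real.sqrt_nonneg (a * p' + b * q')
  have nB := Real.sqrt_nonneg (a * p'' + b * q'')
  -- Cauchy-Schwarz step
  have key : a * (Real.sqrt p' * Real.sqrt p'') + b * (Real.sqrt q' * Real.sqrt q'')
      ≤ Real.sqrt (a * p' + b * q') * Real.sqrt (a * p'' + b * q'') := by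
    have h1 : a * (Real.sqrt p' * Real.sqrt p'') + b * (Real.sqrt q' * Real.sqrt q'')
        ≤ Real.sqrt ((a * p' + b * q') * (a * p'' + b * q'')) := by
      apply Real.le_sqrt_of_sq_le
      rw [← sp', ← sp'', ← sq1, ← sq2,
        Real.sqrt_sq np', Real.sqrt_sq np'', Real.sqrt_sq nq', Real.sqrt_sq nq'']
      nlinarith [sq_nonneg (Real.sqrt p' * Real.sqrt q'' - Real.sqrt q' * Real.sqrt p''),
        mul_pos ha hb]
    rwa [Real.sqrt_mul hA.le] at h1
  -- p < (√p' + √p'')^2 etc.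
  have hPP : p < (Real.sqrt p' + Real.sqrt p'') ^ 2 := by
    rw [← sp]; exact pow_lt_pow_left₀ hP np two_ne_zero
  have hQQ : q < (Real.sqrt q' + Real.sqrt q'') ^ 2 := by
    rw [← sq']; exact pow_lt_pow_left₀ hQ nq two_ne_zero
  have main : a * p + b * q < (Real.sqrt (a * p' + b * q') + Real.sqrt (a * p'' + b * q'')) ^ 2 := by
    nlinarith [mul_lt_mul_of_pos_left hPP ha, mul_lt_mul_of_pos_left hQQ hb, key,
      sA, sB, sp', sp'', sq1, sq2]
  calc Real.sqrt (a * p + b * q)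
      < Real.sqrt ((Real.sqrt (a * p' + b * q') + Real.sqrt (a * p'' + b * q'')) ^ 2) :=
        Real.sqrt_lt_sqrt (by positivity) main
    _ = _ := Real.sqrt_sq (by positivity)

/-- For a triangulated surface with `m` edges and face set `F`
(each face an unordered triple of distinct edge indices), the admissible metric
space `Ω_u = {u : u_e > 0, Σ_e u_e = m, and on each face the square roots
√u_i, √u_j, √u_k satisfy the strict triangle inequalities}` is convex. -/
theorem mesh_admissible_metric_space_convex (m : ℕ) (hm : 0 < m)
    (F : Finset (Finset (Fin m))) (hF : ∀ f ∈ F, f.card = 3) :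
    Convex ℝ {u : Fin m → ℝ |
      (∀ e, 0 < u e) ∧
      (∑ e, u e = (m : ℝ)) ∧
      ∀ f ∈ F, ∀ i ∈ f, ∀ j ∈ f, ∀ k ∈ f, i ≠ j → i ≠ k → j ≠ k →
        Real.sqrt (u i) < Real.sqrt (u j) + Real.sqrt (u k)} := by
  intro x hx y hy a b ha hb hab
  rcases ha.eq_or_lt with rfl | ha'
  · have : b = 1 := by linarith
    subst this
    simpa using hy
  rcases hb.eq_or_lt with rfl | hb'
  · have : a = 1 := by linarith
    subst this
    simpa using hx
  obtain ⟨hx1, hx2, hx3⟩ := hx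
  obtain ⟨hy1, hy2, hy3⟩ := hy
  refine ⟨fun e => ?_, ?_, ?_⟩
  · have := hx1 e; have := hy1 e
    simp only [Pi.add_apply, Pi.smul_apply, smul_eq_mul]
    positivity
  · simp only [Pi.add_apply, Pi.smul_apply, smul_eq_mul]
    rw [Finset.sum_add_distrib, ← Finset.mul_sum, ← Finset.mul_sum, hx2, hy2]
    nlinarith [hab]
  · intro f hf i hi j hj k hk hij hik hjk
    simp only [Pi.add_apply, Pi.smul_apply, smul_eq_mul]
    exact sqrt_combo_lt ha' hb' (hx1 i) (hy1 i) (hx1 j) (hy1 j) (hx1 k) (hy1 k)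
      (hx3 f hf i hi j hj k hk hij hik hjk) (hy3 f hf i hi j hj k hk hij hik hjk)
end
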